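/- Let f : ℝ^D → ℝ be C² near 0 with ∇f(0) = 0, f(0) = 0, and H := H_f(0) invertible. Define φ(x) = f(x) − ½x'Hx, and suppose ∇φ is Lipschitz on B_{R₀} with constant L ≤ ‖H⁻¹‖⁻¹. With c = ‖H⁻¹‖⁻¹ − L, for y_t(x) = Hx + t∇φ(x), define v_t(x) = −φ(x) y_t(x)/|y_t(x)|² for x ≠ 0 and v_t(0) = 0, restricted to B_R with R = cR₀/(‖H‖+L). Then v_t is Lipschitz on B_R with constant a₁ = (L/c)(2 + 3(‖H‖+L)/c). -/

import Mathlib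

open Metric RealInnerProductSpace Classical
noncomputable section

set_option maxHeartbeats 1000000 in
/-- the vector field `v_t` of the homotopic proof of the Morse Lemma is
Lipschitz on `B_R` with constant `a₁ = (L/c)(2 + 3(‖H‖+L)/c)`. -/
theorem stmt11 {D : ℕ}
    (f : EuclideanSpace ℝ (Fin D) → ℝ) (hf : ContDiff ℝ 2 f)
    (hf0 : f 0 = 0) (hgrad0 : gradient f 0 = 0)
    (H H' : EuclideanSpace ℝ (Fin D) →L[ℝ] EuclideanSpace ℝ (Fin D))
    (hH : HasFDerivAt (gradient f) H 0)
    (hinv : H.comp H' = ContinuousLinearMap.id ℝ _ ∧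
            H'.comp H = ContinuousLinearMap.id ℝ _)
    (φ : EuclideanSpace ℝ (Fin D) → ℝ)
    (hφ : ∀ x, φ x = f x - (1/2 : ℝ) * ⟪H x, x⟫)
    (L R₀ : ℝ) (hL : 0 < L) (hLle : L ≤ ‖H'‖⁻¹) (hR₀ : 0 < R₀)
    (hLip : LipschitzOnWith L.toNNReal (gradient φ) (closedBall 0 R₀))
    (c R a₁ : ℝ) (hc : c = ‖H'‖⁻¹ - L) (hR : R = c * R₀ / (‖H‖ + L))
    (ha₁ : a₁ = (L / c) * (2 + 3 * (‖H‖ + L) / c))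
    (t : ℝ) (ht : t ∈ Set.Icc (0:ℝ) 1)
    (y v : EuclideanSpace ℝ (Fin D) → EuclideanSpace ℝ (Fin D))
    (hy : ∀ x, y x = H x + t • gradient φ x)
    (hv : ∀ x, v x = if x = (0 : EuclideanSpace ℝ (Fin D)) then 0 else (-(φ x) / ‖y x‖ ^ 2) • y x) :
    LipschitzOnWith a₁.toNNReal v (closedBall 0 R) := by
  obtain ⟨ht0, ht1⟩ := ht
  have hK : (0:ℝ) < ‖H‖ + L := by positivity
  rcases le_or_gt c 0 with hc0 | hc0
  · -- degenerate case: the ball is empty or a single point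
    have hR0 : R ≤ 0 := by
      rw [hR]
      exact div_nonpos_of_nonpos_of_nonneg (mul_nonpos_of_nonpos_of_nonneg hc0 hR₀.le) hK.le
    apply LipschitzOnWith.of_dist_le_mul
    intro p hp q hq
    have hp0 : p = 0 := by
      have h1 := mem_closedBall_zero_iff.mp hp
      have := norm_nonneg p
      have : ‖p‖ = 0 := le_antisymm (h1.trans hR0) this
      simpa using this
    have hq0 : q = 0 := by
      have h1 := mem_closedBall_zero_iff.mp hq
      have := norm_nonneg q
      have : ‖q‖ = 0 := le_antisymm (h1.trans hR0) this
      simpa using this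
    simp [hp0, hq0]
  -- main case : c > 0
  have hH'inv : (0:ℝ) < ‖H'‖⁻¹ := by rw [hc] at hc0; linarith
  have hH' : (0:ℝ) < ‖H'‖ := inv_pos.mp hH'inv
  -- lower bound for H
  have hHlow : ∀ z : EuclideanSpace ℝ (Fin D), ‖H'‖⁻¹ * ‖z‖ ≤ ‖H z‖ := by
    intro z
    have hz : H' (H z) = z := by
      have := hinv.2
      rw [ContinuousLinearMap.ext_iff] at this
      simpa using this z
    have h1 : ‖z‖ ≤ ‖H'‖ * ‖H z‖ := by
      calc ‖z‖ = ‖H' (H z)‖ := by rw [hz]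
        _ ≤ ‖H'‖ * ‖H z‖ := H'.le_opNorm _
    rw [inv_mul_le_iff₀ hH']
    exact h1
  have hHn : ‖H'‖⁻¹ ≤ ‖H‖ := by
    obtain ⟨u, hu⟩ : ∃ u : EuclideanSpace ℝ (Fin D), H' u ≠ 0 := by
      by_contra h
      push_neg at h
      have h2 : H' = 0 := ContinuousLinearMap.ext fun u => by simpa using h u
      have h3 : ‖H'‖ = 0 := by rw [h2]; exact norm_zero
      linarith
    have hz : (H' u : EuclideanSpace ℝ (Fin D)) ≠ 0 := hu
    have h1 := hHlow (H' u)
    have h2 : ‖H (H' u)‖ ≤ ‖H‖ * ‖H' u‖ := H.le_opNorm _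
    have h3 : (0:ℝ) < ‖H' u‖ := norm_pos_iff.mpr hz
    nlinarith
  have hcK : c ≤ ‖H‖ + L := by rw [hc]; linarith
  have hRR₀ : R ≤ R₀ := by
    rw [hR, div_le_iff₀ hK]
    nlinarith
  have hsub : closedBall (0:EuclideanSpace ℝ (Fin D)) R ⊆ closedBall 0 R₀ := closedBall_subset_closedBall hRR₀
  -- facts about φ
  have hφfun : φ = fun x => f x - (1/2 : ℝ) * ⟪H x, x⟫ := funext hφ
  have hφ0 : φ 0 = 0 := by rw [hφ 0]; simp [hf0]
  have hfdiff : Differentiable ℝ f := hf.differentiable (by norm_num)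
  have hφdiff : Differentiable ℝ φ := by
    rw [hφfun]
    exact hfdiff.sub ((differentiable_const _).mul (H.differentiable.inner ℝ differentiable_id))
  have hfderivf0 : fderiv ℝ f 0 = 0 := by
    have h : (InnerProductSpace.toDual ℝ (EuclideanSpace ℝ (Fin D))).symm (fderiv ℝ f 0) = 0 := hgrad0
    have h2 : (InnerProductSpace.toDual ℝ (EuclideanSpace ℝ (Fin D))).symm (fderiv ℝ f 0) = (InnerProductSpace.toDual ℝ (EuclideanSpace ℝ (Fin D))).symm 0 := by
      rw [h]; simp
    exact (InnerProductSpace.toDual ℝ (EuclideanSpace ℝ (Fin D))).symm.injective h2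
  have hgradφ0 : gradient φ 0 = 0 := by
    have hq1 : HasFDerivAt (fun x : EuclideanSpace ℝ (Fin D) => (1/2:ℝ) * ⟪H x, x⟫) (0 : EuclideanSpace ℝ (Fin D) →L[ℝ] ℝ) 0 := by
      have h1 : HasFDerivAt (fun x : EuclideanSpace ℝ (Fin D) => ⟪H x, x⟫) (0 : EuclideanSpace ℝ (Fin D) →L[ℝ] ℝ) 0 := by
        have h1 := (H.hasFDerivAt (x := 0)).inner ℝ (hasFDerivAt_id (0 : EuclideanSpace ℝ (Fin D)))
        refine h1.congr_fderiv ?_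
        ext z
        simp [fderivInnerCLM_apply]
      simpa using h1.const_mul (1/2 : ℝ)
    have hf1 : HasFDerivAt f (0 : EuclideanSpace ℝ (Fin D) →L[ℝ] ℝ) 0 := by
      have := (hfdiff 0).hasFDerivAt
      rwa [hfderivf0] at this
    have hφ1 : HasFDerivAt φ (0 : EuclideanSpace ℝ (Fin D) →L[ℝ] ℝ) 0 := by
      rw [hφfun]
      exact (hf1.sub hq1).congr_fderiv (sub_zero _)
    simp only [gradient, hφ1.fderiv]
    simp
  have hLnn : (L.toNNReal : ℝ) = L := Real.coe_toNNReal L hL.le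
  have h0mem : (0:EuclideanSpace ℝ (Fin D)) ∈ closedBall (0:EuclideanSpace ℝ (Fin D)) R₀ := mem_closedBall_self hR₀.le
  have hgradlip : ∀ z ∈ closedBall (0:EuclideanSpace ℝ (Fin D)) R₀, ∀ w ∈ closedBall (0:EuclideanSpace ℝ (Fin D)) R₀,
      ‖gradient φ z - gradient φ w‖ ≤ L * ‖z - w‖ := by
    intro z hz w hw
    have := hLip.dist_le_mul z hz w hw
    rwa [dist_eq_norm, dist_eq_norm, hLnn] at this
  have hgradnorm : ∀ z ∈ closedBall (0:EuclideanSpace ℝ (Fin D)) R₀, ‖gradient φ z‖ ≤ L * ‖z‖ := by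
    intro z hz
    have := hgradlip z hz 0 h0mem
    simpa [hgradφ0] using this
  -- |φ x - φ x'| ≤ L (‖x‖+‖x'‖) ‖x - x'‖ on the ball
  have hφbd : ∀ x ∈ closedBall (0:EuclideanSpace ℝ (Fin D)) R₀, ∀ x' ∈ closedBall (0:EuclideanSpace ℝ (Fin D)) R₀,
      |φ x - φ x'| ≤ L * (‖x‖ + ‖x'‖) * ‖x - x'‖ := by
    intro x hx x' hx'
    set m := max ‖x‖ ‖x'‖ with hm
    have hmR₀ : m ≤ R₀ :=
      max_le (mem_closedBall_zero_iff.mp hx) (mem_closedBall_zero_iff.mp hx')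
    have hxm : x ∈ closedBall (0:EuclideanSpace ℝ (Fin D)) m := mem_closedBall_zero_iff.mpr (le_max_left _ _)
    have hx'm : x' ∈ closedBall (0:EuclideanSpace ℝ (Fin D)) m := mem_closedBall_zero_iff.mpr (le_max_right _ _)
    have hfd : ∀ z ∈ closedBall (0:EuclideanSpace ℝ (Fin D)) m,
        HasFDerivWithinAt φ (fderiv ℝ φ z) (closedBall (0:EuclideanSpace ℝ (Fin D)) m) z :=
      fun z _ => (hφdiff z).hasFDerivAt.hasFDerivWithinAt
    have hbound : ∀ z ∈ closedBall (0:EuclideanSpace ℝ (Fin D)) m, ‖fderiv ℝ φ z‖ ≤ L * (‖x‖ + ‖x'‖) := by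
      intro z hz
      have h1 : ‖fderiv ℝ φ z‖ = ‖gradient φ z‖ := by
        simp only [gradient]
        rw [LinearIsometryEquiv.norm_map]
      have hzR₀ : z ∈ closedBall (0:EuclideanSpace ℝ (Fin D)) R₀ :=
        closedBall_subset_closedBall hmR₀ hz
      have h2 := hgradnorm z hzR₀
      have h3 : ‖z‖ ≤ m := mem_closedBall_zero_iff.mp hz
      have h4 : m ≤ ‖x‖ + ‖x'‖ :=
        max_le (by linarith [norm_nonneg x']) (by linarith [norm_nonneg x])
      rw [h1]
      nlinarith [norm_nonneg z]
    have := (convex_closedBall (0:EuclideanSpace ℝ (Fin D)) m).norm_image_sub_le_of_norm_hasFDerivWithin_le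
      hfd hbound hx'm hxm
    rwa [Real.norm_eq_abs] at this
  have hφsq : ∀ x ∈ closedBall (0:EuclideanSpace ℝ (Fin D)) R₀, |φ x| ≤ L * ‖x‖ ^ 2 := by
    intro x hx
    have := hφbd x hx 0 h0mem
    simp only [hφ0, sub_zero, norm_zero, add_zero] at this
    nlinarith [this]
  -- facts about y
  have hy0 : y 0 = 0 := by rw [hy 0]; simp [hgradφ0]
  have hyup : ∀ x ∈ closedBall (0:EuclideanSpace ℝ (Fin D)) R₀, ∀ x' ∈ closedBall (0:EuclideanSpace ℝ (Fin D)) R₀,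
      ‖y x - y x'‖ ≤ (‖H‖ + L) * ‖x - x'‖ := by
    intro x hx x' hx'
    have hid : y x - y x' = H (x - x') + t • (gradient φ x - gradient φ x') := by
      rw [hy x, hy x', map_sub, smul_sub]
      abel
    rw [hid]
    have h1 : ‖H (x - x')‖ ≤ ‖H‖ * ‖x - x'‖ := H.le_opNorm _
    have h2 : ‖t • (gradient φ x - gradient φ x')‖ ≤ L * ‖x - x'‖ := by
      rw [norm_smul, Real.norm_eq_abs, abs_of_nonneg ht0]
      have := hgradlip x hx x' hx'
      nlinarith [norm_nonneg (gradient φ x - gradient φ x')]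
    calc ‖H (x - x') + t • (gradient φ x - gradient φ x')‖
        ≤ ‖H (x - x')‖ + ‖t • (gradient φ x - gradient φ x')‖ := norm_add_le _ _
      _ ≤ (‖H‖ + L) * ‖x - x'‖ := by nlinarith
  have hylow : ∀ x ∈ closedBall (0:EuclideanSpace ℝ (Fin D)) R₀, ∀ x' ∈ closedBall (0:EuclideanSpace ℝ (Fin D)) R₀,
      c * ‖x - x'‖ ≤ ‖y x - y x'‖ := by
    intro x hx x' hx'
    have hid : H (x - x') = (y x - y x') - t • (gradient φ x - gradient φ x') := by
      rw [hy x, hy x', map_sub, smul_sub]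
      abel
    have h1 := hHlow (x - x')
    have h2 : ‖t • (gradient φ x - gradient φ x')‖ ≤ L * ‖x - x'‖ := by
      rw [norm_smul, Real.norm_eq_abs, abs_of_nonneg ht0]
      have := hgradlip x hx x' hx'
      nlinarith [norm_nonneg (gradient φ x - gradient φ x')]
    have h3 : ‖H (x - x')‖ ≤ ‖y x - y x'‖ + L * ‖x - x'‖ := by
      rw [hid]
      calc ‖(y x - y x') - t • (gradient φ x - gradient φ x')‖
          ≤ ‖y x - y x'‖ + ‖t • (gradient φ x - gradient φ x')‖ := norm_sub_le _ _
        _ ≤ ‖y x - y x'‖ + L * ‖x - x'‖ := by linarith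
    rw [hc]
    nlinarith
  have hylowx : ∀ x ∈ closedBall (0:EuclideanSpace ℝ (Fin D)) R₀, c * ‖x‖ ≤ ‖y x‖ := by
    intro x hx
    have := hylow x hx 0 h0mem
    simpa [hy0] using this
  -- final Lipschitz estimate
  have ha₁nn : 0 ≤ a₁ := by
    rw [ha₁]
    have h1 : 0 ≤ L / c := by positivity
    have h2 : 0 ≤ 3 * (‖H‖ + L) / c := by positivity
    nlinarith
  have key : ∀ p ∈ closedBall (0:EuclideanSpace ℝ (Fin D)) R, ∀ q ∈ closedBall (0:EuclideanSpace ℝ (Fin D)) R, ‖q‖ ≤ ‖p‖ →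
      ‖v p - v q‖ ≤ a₁ * ‖p - q‖ := by
    intro p hp q hq hqp
    by_cases hp0 : p = 0
    · have hq0 : q = 0 := by
        rw [hp0] at hqp
        simp only [norm_zero] at hqp
        exact norm_eq_zero.mp (le_antisymm hqp (norm_nonneg q))
      rw [hp0, hq0]
      simp [ha₁nn]
    · have hpn : (0:ℝ) < ‖p‖ := norm_pos_iff.mpr hp0
      have hpR₀ : p ∈ closedBall (0:EuclideanSpace ℝ (Fin D)) R₀ := hsub hp
      have hqR₀ : q ∈ closedBall (0:EuclideanSpace ℝ (Fin D)) R₀ := hsub hq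
      have hyp : (0:ℝ) < ‖y p‖ := lt_of_lt_of_le (mul_pos hc0 hpn) (hylowx p hpR₀)
      have hypn : y p ≠ 0 := norm_pos_iff.mp hyp
      have hyplow : c * ‖p‖ ≤ ‖y p‖ := hylowx p hpR₀
      have hφpbd : |φ p| ≤ L * ‖p‖ ^ 2 := hφsq p hpR₀
      have hvp : v p = (-(φ p) / ‖y p‖ ^ 2) • y p := by rw [hv p, if_neg hp0]
      by_cases hq0 : q = 0
      · rw [hq0, hv 0, if_pos rfl, sub_zero, hvp, norm_smul, Real.norm_eq_abs, abs_div,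
          abs_neg, abs_pow, abs_norm, sub_zero]
        have hvnorm : |φ p| / ‖y p‖ ^ 2 * ‖y p‖ = |φ p| / ‖y p‖ := by
          field_simp
        rw [hvnorm, div_le_iff₀ hyp]
        have hLa : L ≤ a₁ * c := by
          have h1 : a₁ * c = 2 * L + 3 * L * (‖H‖ + L) / c := by
            have hcne : c ≠ 0 := ne_of_gt hc0
            rw [ha₁]; generalize ‖H‖ = n; field_simp
          have h2 : 0 ≤ 3 * L * (‖H‖ + L) / c :=
            div_nonneg (by nlinarith [norm_nonneg H]) hc0.le
          linarith
        linarith [hφpbd, mul_le_mul_of_nonneg_right hLa (pow_nonneg (norm_nonneg p) 2),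
          mul_le_mul_of_nonneg_left hyplow (mul_nonneg ha₁nn (norm_nonneg p))]
      · -- both p and q nonzero
        have hqn : (0:ℝ) < ‖q‖ := norm_pos_iff.mpr hq0
        have hyq : (0:ℝ) < ‖y q‖ := lt_of_lt_of_le (mul_pos hc0 hqn) (hylowx q hqR₀)
        have hyqn : y q ≠ 0 := norm_pos_iff.mp hyq
        have hyqlow : c * ‖q‖ ≤ ‖y q‖ := hylowx q hqR₀
        have hφqbd : |φ q| ≤ L * ‖q‖ ^ 2 := hφsq q hqR₀
        have hvq : v q = (-(φ q) / ‖y q‖ ^ 2) • y q := by rw [hv q, if_neg hq0]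
        set ιp : EuclideanSpace ℝ (Fin D) := ((1:ℝ) / ‖y p‖) ^ 2 • y p with hιp
        set ιq : EuclideanSpace ℝ (Fin D) := ((1:ℝ) / ‖y q‖) ^ 2 • y q with hιq
        have hvp' : v p = (-(φ p)) • ιp := by
          rw [hvp, hιp, smul_smul]
          congr 1
          field_simp
        have hvq' : v q = (-(φ q)) • ιq := by
          rw [hvq, hιq, smul_smul]
          congr 1
          field_simp
        have hdecomp : v p - v q = (φ q - φ p) • ιp + (-(φ q)) • (ιp - ιq) := by
          rw [hvp', hvq']
          module
        have hιpn : ‖ιp‖ = 1 / ‖y p‖ := by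
          rw [hιp, norm_smul, Real.norm_eq_abs, abs_pow, abs_div, abs_one, abs_norm]
          field_simp
        have hιdist : ‖ιp - ιq‖ = 1 / (‖y p‖ * ‖y q‖) * ‖y p - y q‖ := by
          have := dist_div_norm_sq_smul hypn hyqn (1:ℝ)
          rw [dist_eq_norm, dist_eq_norm] at this
          rw [← hιp, ← hιq] at this
          simpa using this
        have hyd : ‖y p - y q‖ ≤ (‖H‖ + L) * ‖p - q‖ := hyup p hpR₀ q hqR₀
        have hφd : |φ q - φ p| ≤ 2 * L * ‖p‖ * ‖p - q‖ := by
          have h := hφbd q hqR₀ p hpR₀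
          rw [norm_sub_rev q p] at h
          calc |φ q - φ p| ≤ L * (‖q‖ + ‖p‖) * ‖p - q‖ := h
            _ ≤ 2 * L * ‖p‖ * ‖p - q‖ := by
                linarith [mul_nonneg (mul_nonneg hL.le (sub_nonneg.2 hqp))
                  (norm_nonneg (p - q))]
        have hT1 : |φ q - φ p| * ‖ιp‖ ≤ 2 * L / c * ‖p - q‖ := by
          rw [hιpn, mul_one_div, div_mul_eq_mul_div, div_le_div_iff₀ hyp hc0]
          linarith [mul_le_mul_of_nonneg_right hφd hc0.le,
            mul_le_mul_of_nonneg_left hyplow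
            (by positivity : (0:ℝ) ≤ 2 * L * ‖p - q‖)]
        have hT2 : |φ q| * ‖ιp - ιq‖ ≤ L * (‖H‖ + L) / c ^ 2 * ‖p - q‖ := by
          rw [hιdist]
          have hprod : (c * ‖p‖) * (c * ‖q‖) ≤ ‖y p‖ * ‖y q‖ :=
            mul_le_mul hyplow hyqlow (by positivity) hyp.le
          have hlhs : |φ q| * (1 / (‖y p‖ * ‖y q‖) * ‖y p - y q‖)
              = |φ q| * ‖y p - y q‖ / (‖y p‖ * ‖y q‖) := by ring
          rw [hlhs]
          rw [div_le_iff₀ (mul_pos hyp hyq)]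
          have h1 : |φ q| * ‖y p - y q‖ ≤ (L * ‖q‖ ^ 2) * ((‖H‖ + L) * ‖p - q‖) :=
            mul_le_mul hφqbd hyd (norm_nonneg _) (by positivity)
          have h2 : L * (‖H‖ + L) / c ^ 2 * ‖p - q‖ * ((c * ‖p‖) * (c * ‖q‖))
              = L * (‖H‖ + L) * ‖p - q‖ * ‖p‖ * ‖q‖ := by
            have hcne : c ≠ 0 := ne_of_gt hc0
            generalize ‖H‖ = n1
            generalize ‖p - q‖ = n2
            generalize ‖p‖ = n3
            generalize ‖q‖ = n4
            field_simp
          have h3 : (L * ‖q‖ ^ 2) * ((‖H‖ + L) * ‖p - q‖)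
              ≤ L * (‖H‖ + L) * ‖p - q‖ * ‖p‖ * ‖q‖ := by
            linarith [mul_le_mul_of_nonneg_left
              (mul_le_mul_of_nonneg_right hqp (norm_nonneg (p - q)))
              (by positivity : (0:ℝ) ≤ L * (‖H‖ + L) * ‖q‖)]
          have h4 : L * (‖H‖ + L) / c ^ 2 * ‖p - q‖ * ((c * ‖p‖) * (c * ‖q‖))
              ≤ L * (‖H‖ + L) / c ^ 2 * ‖p - q‖ * (‖y p‖ * ‖y q‖) :=
            mul_le_mul_of_nonneg_left hprod (by positivity)
          linarith
        have hn1 : ‖(φ q - φ p) • ιp‖ ≤ 2 * L / c * ‖p - q‖ := by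
          have e : ‖(φ q - φ p) • ιp‖ = |φ q - φ p| * ‖ιp‖ := by
            rw [norm_smul, Real.norm_eq_abs]
          rw [e]; exact hT1
        have hn2 : ‖(-(φ q)) • (ιp - ιq)‖ ≤ L * (‖H‖ + L) / c ^ 2 * ‖p - q‖ := by
          have e : ‖(-(φ q)) • (ιp - ιq)‖ = |φ q| * ‖ιp - ιq‖ := by
            rw [norm_smul, Real.norm_eq_abs, abs_neg]
          rw [e]; exact hT2
        calc ‖v p - v q‖ ≤ ‖(φ q - φ p) • ιp‖ + ‖(-(φ q)) • (ιp - ιq)‖ := by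
              rw [hdecomp]; exact norm_add_le _ _
          _ ≤ 2 * L / c * ‖p - q‖ + L * (‖H‖ + L) / c ^ 2 * ‖p - q‖ := by linarith
          _ ≤ a₁ * ‖p - q‖ := by
              have ha₁' : a₁ = 2 * L / c + 3 * (L * (‖H‖ + L)) / c ^ 2 := by
                have hcne : c ≠ 0 := ne_of_gt hc0
                rw [ha₁]; generalize ‖H‖ = n; field_simp
              rw [ha₁']
              have h5 : (0:ℝ) ≤ L * (‖H‖ + L) / c ^ 2 * ‖p - q‖ :=
                mul_nonneg (div_nonneg (mul_nonneg hL.le hK.le) (sq_nonneg c))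
                  (norm_nonneg _)
              have h7 : (2 * L / c + 3 * (L * (‖H‖ + L)) / c ^ 2) * ‖p - q‖
                  = 2 * L / c * ‖p - q‖ + 3 * (L * (‖H‖ + L) / c ^ 2 * ‖p - q‖) := by
                ring
              rw [h7]
              linarith
    -- end key
  apply LipschitzOnWith.of_dist_le_mul
  intro p hp q hq
  rw [Real.coe_toNNReal a₁ ha₁nn, dist_eq_norm, dist_eq_norm]
  rcases le_total ‖q‖ ‖p‖ with h | h
  · exact key p hp q hq h
  · rw [norm_sub_rev (v p), norm_sub_rev p]
    exact key q hq p hp h
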